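/- For the perturbation direction Δ*_3 ∈ L(𝔖_3^{fix}) with parameters x̄ = −2, ȳ = −5, ā = 1, b̄ = 4 (satisfying x̄ + 2ā = 0 and ȳ + ā + b̄ = 0), a real ε > 0 is g_{S_3}-valid (i.e., for every sample s ∈ S_3 and every ℓ, g_s^{(ℓ)}(C*_3 + εΔ*_3)·g_s^{(ℓ)}(C*_3) ≥ 0) if and only if ε ≤ 1/36. -/
import Mathlib


open Finset Filter

/-- Membership in the affine set 𝔖ₖ. -/
def inSk (k : ℕ) (C : Fin k → Matrix (Fin k) (Fin k) ℝ) : Prop :=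
  ∀ ℓ : Fin k,
    (∀ i : Fin k, i ≠ ℓ → ∑ j, C ℓ i j = 0) ∧
    (∀ j : Fin k, j ≠ ℓ → ∑ i, C ℓ i j = 0) ∧
    (∑ i, ∑ j, C ℓ i j = 1)

/-- A k-sample: nonempty subset of [k]×[k] with pairwise distinct second coordinates. -/
def IsSample {k : ℕ} (s : Finset (Fin k × Fin k)) : Prop :=
  s.Nonempty ∧ ∀ p ∈ s, ∀ q ∈ s, p ≠ q → p.2 ≠ q.2

/-- g_s^{(ℓ)}(C) -/
def gPart {k : ℕ} (s : Finset (Fin k × Fin k)) (C : Fin k → Matrix (Fin k) (Fin k) ℝ)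
    (ℓ : Fin k) : ℝ :=
  ∑ p ∈ s, C ℓ p.1 p.2

/-- g_s(C) -/
def gSample {k : ℕ} (s : Finset (Fin k × Fin k)) (C : Fin k → Matrix (Fin k) (Fin k) ℝ) : ℝ :=
  ∑ ℓ : Fin k, |gPart s C ℓ|

/-- g_{S_k}(C) : the maximum of g_s(C) over all k-samples s. -/
noncomputable def gMax (k : ℕ) (C : Fin k → Matrix (Fin k) (Fin k) ℝ) : ℝ :=
  ⨆ s : {s : Finset (Fin k × Fin k) // IsSample s}, gSample s.1 C

/-- multiplicity of ℓ in the multiset of coordinates of elements of s -/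
def mult {k : ℕ} (s : Finset (Fin k × Fin k)) (ℓ : Fin k) : ℕ :=
  (s.filter (fun p => p.1 = ℓ)).card + (s.filter (fun p => p.2 = ℓ)).card

/-- β(s): number of distinct indices among coordinates of s -/
def beta {k : ℕ} (s : Finset (Fin k × Fin k)) : ℕ :=
  (s.image Prod.fst ∪ s.image Prod.snd).card

/-- γ(s): number of diagonal elements of s -/
def gamma {k : ℕ} (s : Finset (Fin k × Fin k)) : ℕ :=
  (s.filter (fun p => p.1 = p.2)).card

/-- the strong homogeneous flow C*_k -/
noncomputable def Cstar (k : ℕ) : Fin k → Matrix (Fin k) (Fin k) ℝ :=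
  fun ℓ i j =>
    if i = ℓ ∧ j = ℓ then 2/(k:ℝ) - 1/(k:ℝ)^2
    else if i = ℓ ∨ j = ℓ then 1/(k:ℝ) - 1/(k:ℝ)^2
    else -1/(k:ℝ)^2

/-- the Sym(k)-invariant tuple with parameters x (i=j=ℓ), y (i=j≠ℓ),
a (exactly one of i,j equals ℓ), b (otherwise) -/
def Cfix (k : ℕ) (x y a b : ℝ) : Fin k → Matrix (Fin k) (Fin k) ℝ :=
  fun ℓ i j =>
    if i = ℓ ∧ j = ℓ then x
    else if i = j then y
    else if i = ℓ ∨ j = ℓ then a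
    else b

/-- The Sym(k)-action on tuples of matrices. -/
def permAct {k : ℕ} (σ : Equiv.Perm (Fin k)) (C : Fin k → Matrix (Fin k) (Fin k) ℝ) :
    Fin k → Matrix (Fin k) (Fin k) ℝ :=
  fun ℓ i j => C (σ⁻¹ ℓ) (σ⁻¹ i) (σ⁻¹ j)

/-- optimal value O_k -/
noncomputable def Ovalue (k : ℕ) : ℝ := sInf {y | ∃ C, inSk k C ∧ gMax k C = y}

/-- the perturbation direction Δ*₃: x̄ = −2, ȳ = −5, ā = 1, b̄ = 4 -/
def Dstar3 : Fin 3 → Matrix (Fin 3) (Fin 3) ℝ := Cfix 3 (-2) (-5) 1 4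


def Gent (ℓ i j : Fin 3) : ℤ :=
  if i = ℓ ∧ j = ℓ then 5 else if i = ℓ ∨ j = ℓ then 2 else -1

def Dent (ℓ i j : Fin 3) : ℤ :=
  if i = ℓ ∧ j = ℓ then -2 else if i = j then -5 else if i = ℓ ∨ j = ℓ then 1 else 4

def Gs (s : Finset (Fin 3 × Fin 3)) (ℓ : Fin 3) : ℤ := ∑ p ∈ s, Gent ℓ p.1 p.2
def Ds (s : Finset (Fin 3 × Fin 3)) (ℓ : Fin 3) : ℤ := ∑ p ∈ s, Dent ℓ p.1 p.2

lemma cstar_entry (ℓ i j : Fin 3) : Cstar 3 ℓ i j = (Gent ℓ i j : ℝ) / 9 := by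
  unfold Cstar Gent
  split_ifs <;> norm_num

lemma dstar_entry (ℓ i j : Fin 3) : Dstar3 ℓ i j = (Dent ℓ i j : ℝ) := by
  unfold Dstar3 Cfix Dent
  split_ifs <;> norm_num

lemma gPart_cstar (s : Finset (Fin 3 × Fin 3)) (ℓ : Fin 3) :
    gPart s (Cstar 3) ℓ = (Gs s ℓ : ℝ) / 9 := by
  unfold gPart Gs
  rw [Int.cast_sum, Finset.sum_div]
  exact Finset.sum_congr rfl fun p _ => cstar_entry ℓ p.1 p.2

lemma gPart_dstar (s : Finset (Fin 3 × Fin 3)) (ℓ : Fin 3) :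
    gPart s Dstar3 ℓ = (Ds s ℓ : ℝ) := by
  unfold gPart Ds
  rw [Int.cast_sum]
  exact Finset.sum_congr rfl fun p _ => dstar_entry ℓ p.1 p.2

lemma gPart_add (ε : ℝ) (s : Finset (Fin 3 × Fin 3)) (ℓ : Fin 3) :
    gPart s (Cstar 3 + ε • Dstar3) ℓ = gPart s (Cstar 3) ℓ + ε * gPart s Dstar3 ℓ := by
  unfold gPart
  rw [Finset.mul_sum, ← Finset.sum_add_distrib]
  refine Finset.sum_congr rfl fun p _ => ?_
  simp [Pi.add_apply, Pi.smul_apply, Matrix.add_apply, Matrix.smul_apply, smul_eq_mul]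

set_option maxRecDepth 100000 in
lemma key : ∀ s : Finset (Fin 3 × Fin 3), ∀ ℓ : Fin 3,
    0 ≤ 4 * (Gs s ℓ)^2 + Gs s ℓ * Ds s ℓ := by decide

theorem stmt19 (ε : ℝ) (hε : 0 < ε) :
    (∀ s : Finset (Fin 3 × Fin 3), IsSample s → ∀ ℓ : Fin 3,
      0 ≤ gPart s (Cstar 3 + ε • Dstar3) ℓ * gPart s (Cstar 3) ℓ) ↔ ε ≤ 1/36 := by
  constructor
  · intro h
    have hs : IsSample ({((0 : Fin 3), (2 : Fin 3))} : Finset (Fin 3 × Fin 3)) := by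
      constructor
      · exact Finset.singleton_nonempty _
      · intro p hp q hq hne
        simp only [Finset.mem_singleton] at hp hq
        subst hp; subst hq; exact absurd rfl hne
    have := h _ hs 1
    rw [gPart_add] at this
    simp only [gPart, Finset.sum_singleton] at this
    rw [cstar_entry, dstar_entry] at this
    have hG : Gent 1 0 2 = -1 := by decide
    have hD : Dent 1 0 2 = 4 := by decide
    rw [hG, hD] at this
    push_cast at this
    nlinarith
  · intro hle s hs ℓ
    rw [gPart_add, gPart_cstar, gPart_dstar]
    have hk := key s ℓ
    have hk' : (0:ℝ) ≤ 4 * (Gs s ℓ : ℝ)^2 + (Gs s ℓ : ℝ) * (Ds s ℓ : ℝ) := by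
      exact_mod_cast hk
    set G : ℝ := (Gs s ℓ : ℝ)
    set D : ℝ := (Ds s ℓ : ℝ)
    rcases le_or_gt 0 (G * D) with hgd | hgd
    · have : (G / 9 + ε * D) * (G / 9) = G^2 / 81 + ε * (G * D) / 9 := by ring
      rw [this]
      positivity
    · have h1 : ε * (G * D) ≥ (1/36) * (G * D) := by nlinarith
      nlinarith
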